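/- For BB-hedonic (equivalently WW- or W-hedonic with at most n(n−1) improvement steps) games, any sequence of contractual individually stable (CIS) deviations starting from the all-singletons partition terminates after at most n(n−1) steps, where n = |N|; hence a partition that is both CIS and individually rational exists and is reached by this process. -/

import Mathlib

open Finset

/-- A partition of the player set into coalitions: `part i` is the coalition
containing player `i`. -/
structure HPartition (N : Type*) where
  part : N → Finset N
  mem_self : ∀ i, i ∈ part i
  eq_of_mem : ∀ i j : N, j ∈ part i → part j = part i

section Defs

variable {N : Type*} [DecidableEq N]

/-- Strict part of a weak preference over coalitions. -/
def SPref (pref : N → Finset N → Finset N → Prop) (i : N) (S T : Finset N) : Prop :=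
  pref i S T ∧ ¬ pref i T S

/-- `S` is an (existing or empty) coalition of the partition `π`. -/
def IsCoalitionOf (π : HPartition N) (S : Finset N) : Prop :=
  S = ∅ ∨ ∃ j, S = π.part j

/-- Nash stability: no player strictly prefers joining another existing
(possibly empty) coalition. -/
def NashStable (pref : N → Finset N → Finset N → Prop) (π : HPartition N) : Prop :=
  ∀ i S, IsCoalitionOf π S → S ≠ π.part i →
    ¬ SPref pref i (insert i S) (π.part i)

/-- Individual stability: no strictly improving move that all members of the
joined coalition weakly approve. -/
def IndStable (pref : N → Finset N → Finset N → Prop) (π : HPartition N) : Prop :=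
  ∀ i S, IsCoalitionOf π S → S ≠ π.part i →
    ¬ (SPref pref i (insert i S) (π.part i) ∧ ∀ j ∈ S, pref j (insert i S) S)

/-- Contractual individual stability: no strictly improving move approved by the
joined coalition and by the abandoned coalition. -/
def ContIndStable (pref : N → Finset N → Finset N → Prop) (π : HPartition N) : Prop :=
  ∀ i S, IsCoalitionOf π S → S ≠ π.part i →
    ¬ (SPref pref i (insert i S) (π.part i) ∧ (∀ j ∈ S, pref j (insert i S) S) ∧
        (∀ j ∈ π.part i, j ≠ i → pref j ((π.part i).erase i) (π.part i)))

/-- Individual rationality: everyone weakly prefers his coalition to being alone. -/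
def IndRational (pref : N → Finset N → Finset N → Prop) (π : HPartition N) : Prop :=
  ∀ i, pref i (π.part i) {i}

/-- A CIS deviation from `π` to `π'`: player `i` moves to the (possibly empty)
existing coalition `T`, strictly improving, while no member of `T` nor of the
abandoned coalition is worse off. -/
def CISDeviation (pref : N → Finset N → Finset N → Prop) (π π' : HPartition N) : Prop :=
  ∃ i T, IsCoalitionOf π T ∧ T ≠ π.part i ∧ i ∉ T ∧
    SPref pref i (insert i T) (π.part i) ∧
    (∀ j ∈ T, pref j (insert i T) T) ∧
    (∀ j ∈ π.part i, j ≠ i → pref j ((π.part i).erase i) (π.part i)) ∧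
    (∀ k, π'.part k = if k = i ∨ k ∈ T then insert i T else (π.part k).erase i)

/-- The weak relation associated with a (primitive) strict relation. -/
def weakOf (sp : N → Finset N → Finset N → Prop) (i : N) (S T : Finset N) : Prop :=
  ¬ sp i T S

/-- Strict part of a weak preference over players. -/
def strictP (p : N → N → N → Prop) (i j k : N) : Prop := p i j k ∧ ¬ p i k j

/-- Player `j` is unacceptable to `i`: `i ≻ᵢ j`. -/
def unacc (p : N → N → N → Prop) (i j : N) : Prop := strictP p i i j

/-- Player `i` likes `j`: `j ≻ᵢ i`. -/
def likes (p : N → N → N → Prop) (i j : N) : Prop := strictP p i j i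

/-- Each player's preference over players is a complete preorder. -/
def CompletePreorder (p : N → N → N → Prop) : Prop :=
  (∀ i j k, p i j k ∨ p i k j) ∧ (∀ i a b c, p i a b → p i b c → p i a c)

/-- The set of `≿ᵢ`-maximal elements of `J`, with `max ∅ = {i}`. -/
def maxSet (p : N → N → N → Prop) (i : N) (J : Finset N) : Set N :=
  if J = ∅ then {i} else {m | m ∈ J ∧ ∀ j ∈ J, p i m j}

/-- The set of `≿ᵢ`-minimal elements of `J`, with `min ∅ = {i}`. -/
def minSet (p : N → N → N → Prop) (i : N) (J : Finset N) : Set N :=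
  if J = ∅ then {i} else {m | m ∈ J ∧ ∀ j ∈ J, p i j m}

/-- W-hedonic (weak) preference over coalitions: compare worst members. -/
def WPref (p : N → N → N → Prop) (i : N) (S T : Finset N) : Prop :=
  ∀ s ∈ minSet p i (S.erase i), ∀ t ∈ minSet p i (T.erase i), p i s t

/-- WW-hedonic (weak) preference over coalitions. -/
def WWPref (p : N → N → N → Prop) (i : N) (S T : Finset N) : Prop :=
  (∃ j ∈ T.erase i, unacc p i j) ∨ WPref p i S T

/-- BB-hedonic (weak) preference over coalitions. -/
def BBPref (p : N → N → N → Prop) (i : N) (S T : Finset N) : Prop :=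
  (∃ j ∈ T.erase i, unacc p i j) ∨
    ((∀ j ∈ S.erase i, ¬ unacc p i j) ∧ (∀ j ∈ T.erase i, ¬ unacc p i j) ∧
      ∀ s ∈ maxSet p i (S.erase i), ∀ t ∈ maxSet p i (T.erase i), p i s t)

/-- B-hedonic strict preference over coalitions: better best member, or
indifferent best members and smaller size. -/
def BStrict (p : N → N → N → Prop) (i : N) (S T : Finset N) : Prop :=
  (∀ s ∈ maxSet p i (S.erase i), ∀ t ∈ maxSet p i (T.erase i), strictP p i s t) ∨
    ((∀ s ∈ maxSet p i (S.erase i), ∀ t ∈ maxSet p i (T.erase i), p i s t ∧ p i t s) ∧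
      S.card < T.card)

/-- B-hedonic weak preference over coalitions. -/
def BWeak (p : N → N → N → Prop) : N → Finset N → Finset N → Prop :=
  weakOf (BStrict p)

end Defs

section Aux

variable {N : Type*} [DecidableEq N] [Fintype N]
variable (p : N → N → N → Prop)

lemma p_refl (hp : CompletePreorder p) (i a : N) : p i a a :=
  (hp.1 i a a).elim id id

lemma exists_max (hp : CompletePreorder p) (i : N) (J : Finset N) (h : J.Nonempty) :
    ∃ m ∈ J, ∀ j ∈ J, p i m j := by
  induction J using Finset.induction_on with
  | empty => exact absurd h (by simp)
  | @insert a s ha ih =>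
    by_cases hs : s.Nonempty
    · obtain ⟨m, hm, hmax⟩ := ih hs
      rcases hp.1 i m a with h1 | h1
      · exact ⟨m, Finset.mem_insert_of_mem hm, fun j hj => by
          rcases Finset.mem_insert.1 hj with rfl | hj
          exacts [h1, hmax j hj]⟩
      · exact ⟨a, Finset.mem_insert_self a s, fun j hj => by
          rcases Finset.mem_insert.1 hj with rfl | hj
          exacts [p_refl p hp i _, hp.2 i a m j h1 (hmax j hj)]⟩
    · rw [Finset.not_nonempty_iff_eq_empty] at hs
      subst hs
      exact ⟨a, by simp, by simp [p_refl p hp i a]⟩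

lemma maxSet_nonempty (hp : CompletePreorder p) (i : N) (J : Finset N) :
    ∃ m, m ∈ maxSet p i J := by
  unfold maxSet
  by_cases hJ : J = ∅
  · simp [hJ]
  · rw [if_neg hJ]
    simpa only [Set.mem_setOf_eq] using exists_max p hp i J (Finset.nonempty_iff_ne_empty.2 hJ)

lemma maxSet_equiv (hp : CompletePreorder p) (i : N) {J : Finset N} {m m' : N}
    (hm : m ∈ maxSet p i J) (hm' : m' ∈ maxSet p i J) : p i m m' := by
  unfold maxSet at hm hm'
  by_cases hJ : J = ∅
  · simp [hJ] at hm hm'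
    rw [hm, hm']
    exact p_refl p hp i i
  · rw [if_neg hJ] at hm hm'
    exact hm.2 m' hm'.1

open Classical in
/-- Rank of a player in `i`'s preference: number of strictly worse players. -/
noncomputable def rank (i m : N) : ℕ :=
  (Finset.univ.filter (fun j => strictP p i m j)).card

lemma rank_mono (hp : CompletePreorder p) {i m m' : N} (h : p i m' m) :
    rank p i m ≤ rank p i m' := by
  classical
  apply Finset.card_le_card
  intro j hj
  simp only [Finset.mem_filter, Finset.mem_univ, true_and] at hj ⊢
  refine ⟨hp.2 i m' m j h hj.1, fun hc => hj.2 (hp.2 i j m' m hc h)⟩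

lemma rank_lt (hp : CompletePreorder p) {i m m' : N} (h : strictP p i m' m) :
    rank p i m < rank p i m' := by
  classical
  apply Finset.card_lt_card
  rw [Finset.ssubset_iff_of_subset]
  · refine ⟨m, ?_, ?_⟩
    · simp only [Finset.mem_filter, Finset.mem_univ, true_and]
      exact h
    · simp only [Finset.mem_filter, Finset.mem_univ, true_and]
      exact fun hc => hc.2 hc.1
  · intro j hj
    simp only [Finset.mem_filter, Finset.mem_univ, true_and] at hj ⊢
    refine ⟨hp.2 i m' m j h.1 hj.1, fun hc => hj.2 (hp.2 i j m' m hc h.1)⟩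

lemma rank_le_cardN (i m : N) : rank p i m ≤ Fintype.card N - 1 := by
  classical
  have h1 : (Finset.univ.filter (fun j => strictP p i m j)) ⊆ Finset.univ.erase m := by
    intro j hj
    simp only [Finset.mem_filter, Finset.mem_univ, true_and] at hj
    refine Finset.mem_erase.2 ⟨fun hc => ?_, Finset.mem_univ j⟩
    subst hc; exact hj.2 hj.1
  calc rank p i m ≤ (Finset.univ.erase m).card := Finset.card_le_card h1
    _ = Fintype.card N - 1 := by
        rw [Finset.card_erase_of_mem (Finset.mem_univ m), Finset.card_univ]

variable (v : N → Finset N → N)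

/-- Invariant: nobody's coalition contains an unacceptable member, and everyone
weakly prefers (the best member of) his coalition to being alone. -/
def Good (π : HPartition N) : Prop :=
  ∀ k, (∀ j ∈ (π.part k).erase k, ¬ unacc p k j) ∧ p k (v k (π.part k)) k

/-- Potential function. -/
noncomputable def F (π : HPartition N) : ℕ :=
  ∑ k, rank p k (v k (π.part k))

lemma F_le (π : HPartition N) :
    F p v π ≤ Fintype.card N * (Fintype.card N - 1) := by
  calc F p v π ≤ ∑ _k : N, (Fintype.card N - 1) :=
        Finset.sum_le_sum (fun k _ => rank_le_cardN p k _)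
    _ = Fintype.card N * (Fintype.card N - 1) := by
        rw [Finset.sum_const, Finset.card_univ, smul_eq_mul]

lemma bbpref_refl (hp : CompletePreorder p) {k : N} {X : Finset N}
    (h : ∀ j ∈ X.erase k, ¬ unacc p k j) : BBPref p k X X :=
  Or.inr ⟨h, h, fun s hs t ht => maxSet_equiv p hp k hs ht⟩

lemma step_weak (hp : CompletePreorder p)
    (hv : ∀ i S, v i S ∈ maxSet p i (S.erase i)) {k : N} {S S' : Finset N}
    (h1 : BBPref p k S' S) (hno : ∀ j ∈ S.erase k, ¬ unacc p k j)
    (hir : p k (v k S) k) :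
    (∀ j ∈ S'.erase k, ¬ unacc p k j) ∧ p k (v k S') k ∧ p k (v k S') (v k S) := by
  rcases h1 with ⟨j, hj, hu⟩ | ⟨h1, h2, h3⟩
  · exact absurd hu (hno j hj)
  · have hps : p k (v k S') (v k S) := h3 _ (hv k S') _ (hv k S)
    exact ⟨h1, hp.2 _ _ _ _ hps hir, hps⟩

lemma step_strict (hp : CompletePreorder p)
    (hv : ∀ i S, v i S ∈ maxSet p i (S.erase i)) {k : N} {S S' : Finset N}
    (h1 : BBPref p k S' S) (h2 : ¬ BBPref p k S S')
    (hno : ∀ j ∈ S.erase k, ¬ unacc p k j) (hir : p k (v k S) k) :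
    strictP p k (v k S') (v k S) := by
  obtain ⟨hno', _, hps⟩ := step_weak p v hp hv h1 hno hir
  refine ⟨hps, fun hcon => h2 ?_⟩
  right
  refine ⟨hno, hno', fun s hs t ht => ?_⟩
  have e1 : p k s (v k S) := maxSet_equiv p hp k hs (hv k S)
  have e2 : p k (v k S') t := maxSet_equiv p hp k (hv k S') ht
  exact hp.2 _ _ _ _ (hp.2 _ _ _ _ e1 hcon) e2

lemma partS_eq {π : HPartition N} {S : Finset N} (hS : IsCoalitionOf π S) :
    ∀ k ∈ S, π.part k = S := by
  intro k hk
  rcases hS with rfl | ⟨j, rfl⟩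
  · exact absurd hk (by simp)
  · exact π.eq_of_mem j k hk

/-- The key step lemma: a CIS deviation preserves the invariant and strictly
increases the potential. -/
lemma key (hp : CompletePreorder p)
    (hv : ∀ i S, v i S ∈ maxSet p i (S.erase i))
    (π π' : HPartition N) (i : N) (S : Finset N)
    (hS : IsCoalitionOf π S) (hne : S ≠ π.part i)
    (hsp : SPref (BBPref p) i (insert i S) (π.part i))
    (hT : ∀ j ∈ S, BBPref p j (insert i S) S)
    (hold : ∀ j ∈ π.part i, j ≠ i → BBPref p j ((π.part i).erase i) (π.part i))
    (hfor : ∀ k, π'.part k = if k = i ∨ k ∈ S then insert i S else (π.part k).erase i)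
    (hGood : Good p v π) : Good p v π' ∧ F p v π < F p v π' := by
  have himp : ∀ k, BBPref p k (π'.part k) (π.part k) := by
    intro k
    rw [hfor k]
    by_cases hc : k = i ∨ k ∈ S
    · rw [if_pos hc]
      rcases hc with rfl | hk
      · exact hsp.1
      · rw [partS_eq hS k hk]; exact hT k hk
    · rw [if_neg hc]
      push_neg at hc
      by_cases hki : k ∈ π.part i
      · rw [π.eq_of_mem i k hki]
        exact hold k hki hc.1
      · have hik : i ∉ π.part k := fun h => hki (by
          rw [π.eq_of_mem k i h]; exact π.mem_self k)
        rw [Finset.erase_eq_of_notMem hik]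
        exact bbpref_refl p hp (hGood k).1
  have hstep : ∀ k, (∀ j ∈ (π'.part k).erase k, ¬ unacc p k j) ∧
      p k (v k (π'.part k)) k ∧ p k (v k (π'.part k)) (v k (π.part k)) :=
    fun k => step_weak p v hp hv (himp k) (hGood k).1 (hGood k).2
  refine ⟨fun k => ⟨(hstep k).1, (hstep k).2.1⟩, ?_⟩
  apply Finset.sum_lt_sum (fun k _ => rank_mono p hp (hstep k).2.2)
  refine ⟨i, Finset.mem_univ i, rank_lt p hp ?_⟩
  have hi' : π'.part i = insert i S := by rw [hfor i, if_pos (Or.inl rfl)]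
  have := step_strict p v hp hv (k := i) (S := π.part i) (S' := insert i S)
    hsp.1 hsp.2 (hGood i).1 (hGood i).2
  rw [← hi'] at this
  exact this

/-- The partition resulting from `i` moving to coalition `S`. -/
def movePart (π : HPartition N) (i : N) (S : Finset N)
    (hS : IsCoalitionOf π S) (hne : S ≠ π.part i) : HPartition N where
  part k := if k = i ∨ k ∈ S then insert i S else (π.part k).erase i
  mem_self k := by
    try dsimp only
    by_cases hc : k = i ∨ k ∈ S
    · rw [if_pos hc]
      rcases hc with rfl | h
      exacts [Finset.mem_insert_self _ _, Finset.mem_insert_of_mem h]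
    · rw [if_neg hc]
      push_neg at hc
      exact Finset.mem_erase.2 ⟨hc.1, π.mem_self k⟩
  eq_of_mem k j hj := by
    try dsimp only at hj ⊢
    by_cases hck : k = i ∨ k ∈ S
    · rw [if_pos hck] at hj ⊢
      rw [if_pos (Finset.mem_insert.1 hj)]
    · rw [if_neg hck] at hj ⊢
      push_neg at hck
      obtain ⟨hji, hjk⟩ := Finset.mem_erase.1 hj
      have hpjk := π.eq_of_mem k j hjk
      have hcj : ¬(j = i ∨ j ∈ S) := by
        rintro (rfl | hjS)
        · exact hji rfl
        · exact hck.2 (by rw [← partS_eq hS j hjS, hpjk]; exact π.mem_self k)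
      rw [if_neg hcj, hpjk]

end Aux


/-- in a BB-hedonic game, any sequence of CIS deviations starting
from the all-singletons partition has length at most n(n−1); hence a partition
that is both CIS and individually rational exists. -/
theorem bb_cis_terminates {N : Type*} [DecidableEq N] [Fintype N]
    (p : N → N → N → Prop) (hp : CompletePreorder p) :
    (∀ (L : ℕ) (π : ℕ → HPartition N),
      (∀ i, (π 0).part i = {i}) →
      (∀ t, t < L → CISDeviation (BBPref p) (π t) (π (t + 1))) →
      L ≤ Fintype.card N * (Fintype.card N - 1)) ∧
    ∃ σ : HPartition N, ContIndStable (BBPref p) σ ∧ IndRational (BBPref p) σ := by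
  classical
  choose v hv using fun (i : N) (S : Finset N) => maxSet_nonempty p hp i (S.erase i)
  have hGoodSing : ∀ (π0 : HPartition N), (∀ i, π0.part i = {i}) → Good p v π0 := by
    intro π0 h0 k
    constructor
    · intro j hj
      rw [h0 k, Finset.erase_singleton] at hj
      exact absurd hj (Finset.notMem_empty j)
    · rw [h0 k]
      have h := hv k {k}
      rw [Finset.erase_singleton] at h
      have hvk : v k {k} = k := by simpa [maxSet] using h
      rw [hvk]; exact p_refl p hp k k
  have hGoodIR : ∀ σ : HPartition N, Good p v σ → IndRational (BBPref p) σ := by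
    intro σ hG i
    right
    refine ⟨(hG i).1, by simp, fun s hs t ht => ?_⟩
    rw [Finset.erase_singleton] at ht
    have hti : t = i := by simpa [maxSet] using ht
    rw [hti]
    exact hp.2 _ _ _ _ (maxSet_equiv p hp i hs (hv i (σ.part i))) (hG i).2
  constructor
  · intro L π h0 hdev
    have hGF : ∀ t, t ≤ L → Good p v (π t) ∧ t ≤ F p v (π t) := by
      intro t
      induction t with
      | zero => exact fun _ => ⟨hGoodSing (π 0) h0, Nat.zero_le _⟩
      | succ t ih =>
        intro hle
        have ht : t < L := Nat.lt_of_succ_le hle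
        obtain ⟨hG, hF⟩ := ih (le_of_lt ht)
        obtain ⟨i, S, hS, hne, hiS, hsp, hT2, hold, hfor⟩ := hdev t ht
        obtain ⟨hG', hF'⟩ := key p v hp hv (π t) (π (t+1)) i S hS hne hsp hT2 hold hfor hG
        exact ⟨hG', Nat.succ_le_of_lt (lt_of_le_of_lt hF hF')⟩
    obtain ⟨_, hF⟩ := hGF L le_rfl
    exact le_trans hF (F_le p v (π L))
  · let π0 : HPartition N := ⟨fun i => {i}, fun i => Finset.mem_singleton_self i,
      fun i j h => by rw [Finset.mem_singleton] at h; rw [h]⟩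
    have hG0 : Good p v π0 := hGoodSing π0 (fun i => rfl)
    let T : Finset ℕ := (Finset.range (Fintype.card N * (Fintype.card N - 1) + 1)).filter
      (fun c => ∃ σ : HPartition N, Good p v σ ∧ F p v σ = c)
    have hT0 : F p v π0 ∈ T := Finset.mem_filter.2
      ⟨Finset.mem_range.2 (Nat.lt_succ_of_le (F_le p v π0)), π0, hG0, rfl⟩
    have hTne : T.Nonempty := ⟨_, hT0⟩
    obtain ⟨σ, hGσ, hFσ⟩ : ∃ σ : HPartition N, Good p v σ ∧ F p v σ = T.max' hTne :=
      (Finset.mem_filter.1 (T.max'_mem hTne)).2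
    refine ⟨σ, ?_, hGoodIR σ hGσ⟩
    intro i S hS hne hcon
    obtain ⟨hsp, hT2, hold⟩ := hcon
    obtain ⟨hG', hF'⟩ := key p v hp hv σ (movePart σ i S hS hne) i S hS hne hsp hT2 hold
      (fun k => rfl) hGσ
    have hmem : F p v (movePart σ i S hS hne) ∈ T := Finset.mem_filter.2
      ⟨Finset.mem_range.2 (Nat.lt_succ_of_le (F_le p v _)), _, hG', rfl⟩
    have hle := Finset.le_max' T _ hmem
    omega
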